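/- Let k ≥ 1 and let (c_n)_{n≥1} be a bounded sequence of complex numbers such that ‖(c_n)‖_{U^{k+1}[N]} → 0 as N → ∞. Then (c_n) is an oscillating sequence of order k: for every real polynomial P of degree at most k, (1/N) ∑_{n=1}^{N} c_n e^{2πiP(n)} → 0 as N → ∞. -/

import Mathlib

open Filter Finset

/-- The Gowers inner product of a family `(f ω)_{ω ∈ {0,1}^d}` of functions on a finite abelian
group `G`. -/
noncomputable def gowersInner (G : Type*) [AddCommGroup G] [Fintype G] (d : ℕ)
    (f : (Fin d → Bool) → G → ℂ) : ℂ :=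
  ((Fintype.card G : ℂ) ^ (d + 1))⁻¹ *
    ∑ x : G, ∑ h : Fin d → G, ∏ ω : Fin d → Bool,
      (starRingEnd ℂ)^[(Finset.univ.filter fun i : Fin d => ω i = true).card]
        (f ω (x + ∑ i : Fin d, if ω i = true then h i else 0))

/-- The Gowers uniformity norm `‖f‖_{U^d(G)}`, defined by
`‖f‖_{U^d(G)}^{2^d} = ⟨(f,…,f)⟩_{U^d(G)}` (a nonnegative real). -/
noncomputable def gowersNorm (G : Type*) [AddCommGroup G] [Fintype G] (d : ℕ)
    (f : G → ℂ) : ℝ :=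
  (gowersInner G d fun _ => f).re ^ ((1 : ℝ) / 2 ^ d)

/-- The Gowers norm of `c` over the interval `{1, …, N}`:
`‖c‖_{U^d[N]} = ‖c̃‖_{U^d(ℤ/2^d N ℤ)} / ‖𝟙_{[N]}‖_{U^d(ℤ/2^d N ℤ)}`, where `c̃` is `c` on
`{1,…,N}` extended by `0` to `ℤ/2^d N ℤ` and `𝟙_{[N]}` is the indicator of `{1,…,N}`. -/
noncomputable def gowersIntervalNorm (d N : ℕ) (c : ℕ → ℂ) : ℝ :=
  if hN : 0 < N then
    haveI : NeZero (2 ^ d * N) := ⟨by positivity⟩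
    gowersNorm (ZMod (2 ^ d * N)) d
        (fun x => if 1 ≤ x.val ∧ x.val ≤ N then c x.val else 0) /
      gowersNorm (ZMod (2 ^ d * N)) d
        (fun x => if 1 ≤ x.val ∧ x.val ≤ N then 1 else 0)
  else 0


namespace OscAux

lemma conj_iter (m : ℕ) (z : ℂ) :
    (starRingEnd ℂ)^[m] z = if Even m then z else (starRingEnd ℂ) z := by
  induction m with
  | zero => simp
  | succ n ih =>
      rw [Function.iterate_succ_apply', ih]
      by_cases h : Even n <;> simp [h, Nat.even_add_one]

lemma conj_iter_mul (m : ℕ) (z w : ℂ) :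
    (starRingEnd ℂ)^[m] (z * w) = (starRingEnd ℂ)^[m] z * (starRingEnd ℂ)^[m] w := by
  rw [conj_iter, conj_iter, conj_iter]; split_ifs <;> simp

lemma conj_iter_zero (m : ℕ) : (starRingEnd ℂ)^[m] (0 : ℂ) = 0 := by
  rw [conj_iter]; split_ifs <;> simp

def wt {d : ℕ} (ω : Fin d → Bool) : ℕ := (Finset.univ.filter fun i : Fin d => ω i = true).card

lemma wt_cons {d : ℕ} (b : Bool) (ω : Fin d → Bool) :
    wt (Fin.cons b ω) = (if b = true then 1 else 0) + wt ω := by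
  simp only [wt, Finset.card_filter, Fin.sum_univ_succ, Fin.cons_zero, Fin.cons_succ]

variable {G : Type*} [AddCommGroup G] [Fintype G]

/-- the unnormalized inner sum at fixed h -/
noncomputable def gA (d : ℕ) (f : G → ℂ) (h : Fin d → G) : ℂ :=
  ∑ x : G, ∏ ω : Fin d → Bool,
    (starRingEnd ℂ)^[wt ω] (f (x + ∑ i : Fin d, if ω i = true then h i else 0))

noncomputable def gSum (d : ℕ) (f : G → ℂ) : ℂ := ∑ h : Fin d → G, gA d f h

lemma gowersInner_eq (d : ℕ) (f : G → ℂ) :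
    gowersInner G d (fun _ => f) = ((Fintype.card G : ℂ) ^ (d + 1))⁻¹ * gSum d f := by
  rw [gowersInner, gSum]
  congr 1
  rw [Finset.sum_comm]
  rfl

noncomputable def gB (d : ℕ) (f : G → ℂ) (h : Fin d → G) (x : G) : ℂ :=
  ∏ ω : Fin d → Bool,
    (starRingEnd ℂ)^[wt ω] (f (x + ∑ i : Fin d, if ω i = true then h i else 0))

lemma gA_eq (d : ℕ) (f : G → ℂ) (h : Fin d → G) : gA d f h = ∑ x : G, gB d f h x := rfl

lemma prod_cons_split (d : ℕ) (f : G → ℂ) (y : G) (h : Fin d → G) (x : G) :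
    (∏ ω : Fin (d+1) → Bool,
      (starRingEnd ℂ)^[wt ω]
        (f (x + ∑ i : Fin (d+1), if ω i = true then (Fin.cons y h : Fin (d+1) → G) i else 0)))
      = gB d f h x * (starRingEnd ℂ) (gB d f h (x + y)) := by
  rw [← Equiv.prod_comp (Fin.consEquiv (fun _ => Bool)), Fintype.prod_prod_type]
  rw [Fintype.prod_bool]
  have harg : ∀ (b : Bool) (ω : Fin d → Bool),
      (∑ i : Fin (d+1), if (Fin.consEquiv (fun _ => Bool)) (b, ω) i = true
          then (Fin.cons y h : Fin (d+1) → G) i else 0)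
        = (if b = true then y else 0) + ∑ i : Fin d, if ω i = true then h i else 0 := by
    intro b ω
    rw [Fin.sum_univ_succ]
    simp [Fin.consEquiv, Fin.cons_zero, Fin.cons_succ]
  have hwt : ∀ (b : Bool) (ω : Fin d → Bool),
      wt ((Fin.consEquiv (fun _ => Bool)) (b, ω)) = (if b = true then 1 else 0) + wt ω := by
    intro b ω
    simp only [Fin.consEquiv, Equiv.coe_fn_mk]
    exact wt_cons b ω
  rw [mul_comm]
  congr 1
  · -- b = false factor
    rw [gB]
    apply Finset.prod_congr rfl
    intro ω _
    rw [hwt, harg]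
    simp
  · -- b = true factor
    rw [gB, map_prod]
    apply Finset.prod_congr rfl
    intro ω _
    rw [hwt, harg]
    simp only [eq_self_iff_true, if_true]
    rw [Function.iterate_add_apply, Function.iterate_one, ← add_assoc]

lemma gSum_succ (d : ℕ) (f : G → ℂ) :
    gSum (d + 1) f = ∑ h : Fin d → G, (gA d f h) * (starRingEnd ℂ) (gA d f h) := by
  rw [gSum, ← Equiv.sum_comp (Fin.consEquiv (fun _ => G)), Fintype.sum_prod_type]
  rw [Finset.sum_comm]
  apply Finset.sum_congr rfl
  intro h _
  have key : ∀ y : G, gA (d+1) f ((Fin.consEquiv (fun _ => G)) (y, h))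
      = ∑ x : G, gB d f h x * (starRingEnd ℂ) (gB d f h (x + y)) := by
    intro y
    rw [gA]
    apply Finset.sum_congr rfl
    intro x _
    exact prod_cons_split d f y h x
  simp only [key]
  rw [Finset.sum_comm, gA_eq, Finset.sum_mul]
  apply Finset.sum_congr rfl
  intro x _
  rw [← Finset.mul_sum, ← map_sum]
  congr 2
  exact Fintype.sum_equiv (Equiv.addLeft x) _ _ (fun i => rfl)

lemma inner_succ_re [Nonempty G] (d : ℕ) (f : G → ℂ) :
    (gowersInner G (d+1) fun _ => f).re
      = (((Fintype.card G : ℝ))^(d+2))⁻¹ * ∑ h : Fin d → G, Complex.normSq (gA d f h) := by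
  rw [gowersInner_eq, gSum_succ]
  simp only [Complex.mul_conj]
  rw [← Complex.ofReal_sum]
  have : ((Fintype.card G : ℂ) ^ (d+1+1))⁻¹ = ((((Fintype.card G : ℝ)^(d+2)):ℝ):ℂ)⁻¹ := by
    push_cast; ring
  rw [this, ← Complex.ofReal_inv, ← Complex.ofReal_mul, Complex.ofReal_re]

lemma inner_re_nonneg [Nonempty G] (d : ℕ) (hd : 1 ≤ d) (f : G → ℂ) :
    0 ≤ (gowersInner G d fun _ => f).re := by
  obtain ⟨m, rfl⟩ := Nat.exists_eq_add_of_le hd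
  rw [show 1 + m = m + 1 by ring, inner_succ_re]
  apply mul_nonneg (by positivity) (Finset.sum_nonneg fun h _ => Complex.normSq_nonneg _)

lemma inner_step [Nonempty G] (d : ℕ) (f : G → ℂ) :
    ‖gowersInner G d fun _ => f‖ ^ 2 ≤ (gowersInner G (d+1) fun _ => f).re := by
  have hn : (0:ℝ) < (Fintype.card G : ℝ) := by exact_mod_cast Fintype.card_pos
  set n : ℝ := (Fintype.card G : ℝ) with hdefn
  set S : ℝ := ∑ h : Fin d → G, Complex.normSq (gA d f h) with hS
  have hS0 : 0 ≤ S := Finset.sum_nonneg fun h _ => Complex.normSq_nonneg _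
  set T : ℝ := ‖gSum d f‖ with hT
  have h1 : ‖gowersInner G d fun _ => f‖ = (n^(d+1))⁻¹ * T := by
    rw [gowersInner_eq, norm_mul, norm_inv]
    congr 1
    rw [show ((Fintype.card G : ℂ))^(d+1) = (((n^(d+1)):ℝ):ℂ) by rw [hdefn]; push_cast; ring]
    rw [Complex.norm_real, Real.norm_of_nonneg (by positivity)]
  have key : T^2 ≤ n^d * S := by
    have h3 : T ≤ ∑ h : Fin d → G, ‖gA d f h‖ := by
      rw [hT, gSum]
      simpa only using norm_sum_le Finset.univ (gA d f)
    have h4 : (∑ h : Fin d → G, ‖gA d f h‖)^2 ≤ n^d * S := by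
      have := Finset.sum_mul_sq_le_sq_mul_sq Finset.univ (fun _ => (1:ℝ))
        (fun h : Fin d → G => ‖gA d f h‖)
      simp only [one_mul, one_pow, Finset.sum_const, Finset.card_univ, nsmul_eq_mul, mul_one]
        at this
      calc (∑ h : Fin d → G, ‖gA d f h‖)^2
          ≤ (Fintype.card (Fin d → G) : ℝ) * ∑ h : Fin d → G, ‖gA d f h‖^2 := this
        _ = n^d * S := by
            rw [hS]
            congr 1
            · rw [hdefn]
              norm_cast
              rw [Fintype.card_fun, Fintype.card_fin]
            · exact Finset.sum_congr rfl fun h _ => Complex.sq_norm _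
    calc T^2 ≤ (∑ h : Fin d → G, ‖gA d f h‖)^2 := by
          apply pow_le_pow_left₀ (norm_nonneg _) h3
      _ ≤ n^d * S := h4
  rw [h1, inner_succ_re]
  calc ((n^(d+1))⁻¹ * T)^2 = (n^(2*(d+1)))⁻¹ * T^2 := by
        rw [mul_pow, inv_pow, ← pow_mul, mul_comm (d+1) 2]
    _ ≤ (n^(2*(d+1)))⁻¹ * (n^d * S) := by
        apply mul_le_mul_of_nonneg_left key (by positivity)
    _ = (n^(d+2))⁻¹ * S := by
        rw [show 2*(d+1) = d + (d+2) by ring, pow_add, mul_inv]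
        field_simp

lemma abs_inner_zero_pow_le [Nonempty G] (f : G → ℂ) (d : ℕ) (hd : 1 ≤ d) :
    ‖gowersInner G 0 fun _ => f‖ ^ (2^d) ≤ (gowersInner G d fun _ => f).re := by
  induction d with
  | zero => omega
  | succ m ih =>
    rcases Nat.eq_or_lt_of_le hd with h | h
    · rw [← h]
      simpa using inner_step 0 f
    · have hm : 1 ≤ m := by omega
      have h0 : (0:ℝ) ≤ ‖gowersInner G 0 fun _ => f‖ ^ (2^m) := by positivity
      calc ‖gowersInner G 0 fun _ => f‖ ^ (2^(m+1))
          = (‖gowersInner G 0 fun _ => f‖ ^ (2^m))^2 := by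
            rw [← pow_mul, pow_succ]
        _ ≤ ((gowersInner G m fun _ => f).re)^2 := by
            apply pow_le_pow_left₀ h0 (ih hm)
        _ ≤ (‖gowersInner G m fun _ => f‖)^2 := by
            have h1 := Complex.sq_norm (gowersInner G m fun _ => f)
            have h2 := Complex.normSq_apply (gowersInner G m fun _ => f)
            nlinarith [sq_nonneg (gowersInner G m fun _ => f).im]
        _ ≤ (gowersInner G (m+1) fun _ => f).re := inner_step m f

lemma abs_avg_le_gowersNorm [Nonempty G] (f : G → ℂ) (d : ℕ) (hd : 1 ≤ d) :
    ‖((Fintype.card G : ℂ))⁻¹ * ∑ x : G, f x‖ ≤ gowersNorm G d f := by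
  have hz : gowersInner G 0 (fun _ => f) = ((Fintype.card G : ℂ))⁻¹ * ∑ x : G, f x := by
    rw [gowersInner]
    simp
  rw [← hz, gowersNorm]
  have h := abs_inner_zero_pow_le f d hd
  set a : ℝ := ‖gowersInner G 0 fun _ => f‖ with ha
  have ha0 : 0 ≤ a := norm_nonneg _
  have : a = (a ^ (2^d : ℕ)) ^ ((1:ℝ)/2^d) := by
    rw [← Real.rpow_natCast a (2^d), ← Real.rpow_mul ha0]
    rw [show ((2^d : ℕ) : ℝ) * ((1:ℝ)/2^d) = 1 by push_cast; field_simp]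
    exact (Real.rpow_one a).symm
  rw [this]
  apply Real.rpow_le_rpow (by positivity) h (by positivity)

lemma deg_step (Q : Polynomial ℝ) (r : ℝ) (n : ℕ) (h : Q.degree < ((n+1 : ℕ) : WithBot ℕ)) :
    (Q - Q.comp (Polynomial.X + Polynomial.C r)).degree < ((n : ℕ) : WithBot ℕ) := by
  by_cases hQ : Q = 0
  · simp [hQ]
  · have hndc : (Polynomial.X + Polynomial.C r : Polynomial ℝ).natDegree = 1 :=
      Polynomial.natDegree_X_add_C r
    have h1 : (Q.comp (Polynomial.X + Polynomial.C r)).natDegree = Q.natDegree := by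
      rw [Polynomial.natDegree_comp, hndc, mul_one]
    have hl : (Q.comp (Polynomial.X + Polynomial.C r)).leadingCoeff = Q.leadingCoeff := by
      rw [Polynomial.leadingCoeff_comp (by rw [hndc]; exact one_ne_zero),
        Polynomial.leadingCoeff_X_add_C, one_pow, mul_one]
    have hc0 : Q.comp (Polynomial.X + Polynomial.C r) ≠ 0 := by
      intro hcontra
      apply hQ
      rw [← Polynomial.leadingCoeff_eq_zero, ← hl, hcontra, Polynomial.leadingCoeff_zero]
    have hdeg : Q.degree = (Q.comp (Polynomial.X + Polynomial.C r)).degree := by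
      rw [Polynomial.degree_eq_natDegree hQ, Polynomial.degree_eq_natDegree hc0, h1]
    have hlt := Polynomial.degree_sub_lt hdeg hQ hl.symm
    have hle : Q.degree ≤ ((n : ℕ) : WithBot ℕ) := by
      rw [Polynomial.degree_eq_natDegree hQ] at h ⊢
      have : Q.natDegree < n + 1 := by exact_mod_cast h
      exact_mod_cast Nat.lt_succ_iff.mp this
    exact lt_of_lt_of_le hlt hle

lemma alt_sum_poly : ∀ (d : ℕ) (Q : Polynomial ℝ), Q.degree < ((d : ℕ) : WithBot ℕ) →
    ∀ (t : Fin d → ℝ) (x : ℝ),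
    ∑ ω : Fin d → Bool, (-1:ℝ)^(wt ω) * Q.eval (x + ∑ i : Fin d, if ω i = true then t i else 0)
      = 0 := by
  intro d
  induction d with
  | zero =>
      intro Q hQ t x
      have hbot : Q.degree = ⊥ := by
        have := hQ
        rw [Nat.cast_zero] at this
        exact Nat.WithBot.lt_zero_iff.mp this
      have : Q = 0 := Polynomial.degree_eq_bot.mp hbot
      simp [this]
  | succ d ih =>
      intro Q hQ t x
      rw [← Equiv.sum_comp (Fin.consEquiv (fun _ => Bool)), Fintype.sum_prod_type,
        Fintype.sum_bool]
      have hwt : ∀ (b : Bool) (ω : Fin d → Bool),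
          wt ((Fin.consEquiv (fun _ => Bool)) (b, ω)) = (if b = true then 1 else 0) + wt ω := by
        intro b ω
        simp only [Fin.consEquiv, Equiv.coe_fn_mk]
        exact wt_cons b ω
      have harg : ∀ (b : Bool) (ω : Fin d → Bool),
          (∑ i : Fin (d+1), if (Fin.consEquiv (fun _ => Bool)) (b, ω) i = true then t i else 0)
            = (if b = true then t 0 else 0)
              + ∑ i : Fin d, if ω i = true then t i.succ else 0 := by
        intro b ω
        rw [Fin.sum_univ_succ]
        simp [Fin.consEquiv, Fin.cons_zero, Fin.cons_succ]
      rw [← Finset.sum_add_distrib]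
      have key : ∀ ω : Fin d → Bool,
          ((-1:ℝ)^(wt ((Fin.consEquiv (fun _ => Bool)) (true, ω))) *
            Q.eval (x + ∑ i : Fin (d+1),
              if (Fin.consEquiv (fun _ => Bool)) (true, ω) i = true then t i else 0))
          + ((-1:ℝ)^(wt ((Fin.consEquiv (fun _ => Bool)) (false, ω))) *
            Q.eval (x + ∑ i : Fin (d+1),
              if (Fin.consEquiv (fun _ => Bool)) (false, ω) i = true then t i else 0))
          = (-1:ℝ)^(wt ω) *
            (Q - Q.comp (Polynomial.X + Polynomial.C (t 0))).eval
              (x + ∑ i : Fin d, if ω i = true then t i.succ else 0) := by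
        intro ω
        rw [hwt, hwt, harg, harg]
        have e1 : (if (true:Bool) = true then t 0 else 0) = t 0 := by simp
        have e2 : (if (false:Bool) = true then t 0 else 0) = 0 := by simp
        have e3 : (if (true:Bool) = true then (1:ℕ) else 0) = 1 := by simp
        have e4 : (if (false:Bool) = true then (1:ℕ) else 0) = 0 := by simp
        rw [e1, e2, e3, e4]
        rw [Polynomial.eval_sub, Polynomial.eval_comp, Polynomial.eval_add,
          Polynomial.eval_X, Polynomial.eval_C]
        rw [show x + (t 0 + ∑ i : Fin d, if ω i = true then t i.succ else 0)
            = (x + ∑ i : Fin d, if ω i = true then t i.succ else 0) + t 0 by ring]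
        ring
      rw [Finset.sum_congr rfl fun ω _ => key ω]
      exact ih (Q - Q.comp (Polynomial.X + Polynomial.C (t 0)))
        (deg_step Q (t 0) d hQ) (fun i => t i.succ) x

lemma zmod_box_lift {M N : ℕ} [NeZero M] (hMN : 2*N ≤ M + 1) {ι : Type*} [Fintype ι]
    [DecidableEq ι] (x : ZMod M) (h : ι → ZMod M)
    (H : ∀ s : Finset ι, 1 ≤ (x + ∑ i ∈ s, h i).val ∧ (x + ∑ i ∈ s, h i).val ≤ N) :
    ∀ s : Finset ι, ((x + ∑ i ∈ s, h i).val : ℤ)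
      = (x.val : ℤ) + ∑ i ∈ s, (((x + h i).val : ℤ) - (x.val : ℤ)) := by
  have hvcast : ∀ z : ZMod M, ((z.val : ℕ) : ZMod M) = z := by
    intro z
    rw [ZMod.natCast_val, ZMod.cast_id]
  intro s
  induction s using Finset.induction_on with
  | empty => simp
  | @insert a s ha ih =>
      rw [Finset.sum_insert ha, Finset.sum_insert ha]
      have h1 := H (insert a s)
      rw [Finset.sum_insert ha] at h1
      have h2 := H s
      have h3 := H {a}
      rw [Finset.sum_singleton] at h3
      have h4 := H ∅
      rw [Finset.sum_empty, add_zero] at h4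
      have hcong : ((x + (h a + ∑ i ∈ s, h i)).val : ℤ)
          - (((x + ∑ i ∈ s, h i).val : ℤ) + (((x + h a).val : ℤ) - (x.val : ℤ))) = 0 := by
        apply Int.eq_zero_of_abs_lt_dvd
        · have hz : ((((x + (h a + ∑ i ∈ s, h i)).val : ℤ)
              - (((x + ∑ i ∈ s, h i).val : ℤ) + (((x + h a).val : ℤ) - (x.val : ℤ))) : ℤ)
                : ZMod M) = 0 := by
            push_cast
            rw [hvcast, hvcast, hvcast, hvcast]
            ring
          exact_mod_cast (ZMod.intCast_zmod_eq_zero_iff_dvd _ M).mp hz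
        · rw [abs_lt]
          obtain ⟨a1, a2⟩ := h1
          obtain ⟨b1, b2⟩ := h2
          obtain ⟨c1, c2⟩ := h3
          obtain ⟨d1, d2⟩ := h4
          constructor <;> [skip; skip] <;> omega
      rw [ih] at hcong
      omega

lemma hexp_iter (w : ℕ) (r : ℝ) :
    (starRingEnd ℂ)^[w] (Complex.exp (2*Real.pi*Complex.I*(r:ℂ)))
      = Complex.exp ((((-1:ℝ)^w : ℝ) : ℂ) * (2*Real.pi*Complex.I*(r:ℂ))) := by
  rw [conj_iter]
  by_cases hw : Even w
  · rw [if_pos hw, hw.neg_one_pow]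
    norm_num
  · rw [if_neg hw, (Nat.not_even_iff_odd.mp hw).neg_one_pow]
    rw [← Complex.exp_conj]
    congr 1
    rw [map_mul, map_mul, map_mul, Complex.conj_I, Complex.conj_ofReal,
      Complex.conj_ofReal, map_ofNat]
    push_cast
    ring

lemma inner_phase {M N : ℕ} [NeZero M] (hMN : 2*N ≤ M + 1) (d : ℕ) (c : ℕ → ℂ)
    (P : Polynomial ℝ) (hP : P.degree < ((d : ℕ) : WithBot ℕ)) :
    gowersInner (ZMod M) d (fun _ => fun x : ZMod M =>
        if 1 ≤ x.val ∧ x.val ≤ N then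
          c x.val * Complex.exp (2*Real.pi*Complex.I*((P.eval (x.val : ℝ) : ℝ) : ℂ)) else 0)
      = gowersInner (ZMod M) d
          (fun _ => fun x : ZMod M => if 1 ≤ x.val ∧ x.val ≤ N then c x.val else 0) := by
  rw [gowersInner, gowersInner]
  congr 1
  apply Finset.sum_congr rfl; intro x _
  apply Finset.sum_congr rfl; intro h _
  by_cases hall : ∀ ω : Fin d → Bool,
      1 ≤ (x + ∑ i : Fin d, if ω i = true then h i else 0).val
        ∧ (x + ∑ i : Fin d, if ω i = true then h i else 0).val ≤ N
  · -- all corners in range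
    have hs : ∀ s : Finset (Fin d),
        1 ≤ (x + ∑ i ∈ s, h i).val ∧ (x + ∑ i ∈ s, h i).val ≤ N := by
      intro s
      simpa only [decide_eq_true_eq, Finset.sum_ite_mem, Finset.univ_inter]
        using hall fun i => decide (i ∈ s)
    have hlift := zmod_box_lift hMN x h hs
    set tR : Fin d → ℝ := fun i => ((x + h i).val : ℝ) - (x.val : ℝ) with htR
    have hval : ∀ ω : Fin d → Bool,
        (((x + ∑ i : Fin d, if ω i = true then h i else 0).val : ℕ) : ℝ)
          = ((x.val : ℕ) : ℝ) + ∑ i : Fin d, if ω i = true then tR i else 0 := by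
      intro ω
      have h1 := hlift (Finset.univ.filter fun i => ω i = true)
      simp only [Finset.sum_filter] at h1
      have h2 := congrArg (fun z : ℤ => (z : ℝ)) h1
      push_cast at h2
      rw [htR]
      rw [h2]
    have hzero := alt_sum_poly d P hP tR ((x.val : ℕ) : ℝ)
    -- rewrite each factor
    have hfac : ∀ ω : Fin d → Bool,
        (starRingEnd ℂ)^[wt ω]
          ((fun y : ZMod M => if 1 ≤ y.val ∧ y.val ≤ N then
            c y.val * Complex.exp (2*Real.pi*Complex.I*((P.eval (y.val : ℝ) : ℝ) : ℂ)) else 0)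
            (x + ∑ i : Fin d, if ω i = true then h i else 0))
          = (starRingEnd ℂ)^[wt ω]
            ((fun y : ZMod M => if 1 ≤ y.val ∧ y.val ≤ N then c y.val else 0)
              (x + ∑ i : Fin d, if ω i = true then h i else 0))
            * Complex.exp ((((-1:ℝ)^(wt ω) : ℝ) : ℂ)
                * (2*Real.pi*Complex.I*((P.eval
                    (((x + ∑ i : Fin d, if ω i = true then h i else 0).val : ℕ) : ℝ) : ℝ) : ℂ))) := by
      intro ω
      simp only
      rw [if_pos (hall ω), if_pos (hall ω), conj_iter_mul, hexp_iter]
    calc (∏ ω : Fin d → Bool, (starRingEnd ℂ)^[(Finset.univ.filter fun i : Fin d => ω i = true).card]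
          ((fun y : ZMod M => if 1 ≤ y.val ∧ y.val ≤ N then
            c y.val * Complex.exp (2*Real.pi*Complex.I*((P.eval (y.val : ℝ) : ℝ) : ℂ)) else 0)
            (x + ∑ i : Fin d, if ω i = true then h i else 0)))
        = (∏ ω : Fin d → Bool, (starRingEnd ℂ)^[wt ω]
            ((fun y : ZMod M => if 1 ≤ y.val ∧ y.val ≤ N then c y.val else 0)
              (x + ∑ i : Fin d, if ω i = true then h i else 0)))
          * ∏ ω : Fin d → Bool, Complex.exp ((((-1:ℝ)^(wt ω) : ℝ) : ℂ)
              * (2*Real.pi*Complex.I*((P.eval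
                  (((x + ∑ i : Fin d, if ω i = true then h i else 0).val : ℕ) : ℝ) : ℝ) : ℂ))) := by
          rw [← Finset.prod_mul_distrib]
          exact Finset.prod_congr rfl fun ω _ => hfac ω
      _ = ∏ ω : Fin d → Bool, (starRingEnd ℂ)^[wt ω]
            ((fun y : ZMod M => if 1 ≤ y.val ∧ y.val ≤ N then c y.val else 0)
              (x + ∑ i : Fin d, if ω i = true then h i else 0)) := by
          rw [← Complex.exp_sum]
          have : (∑ ω : Fin d → Bool, (((-1:ℝ)^(wt ω) : ℝ) : ℂ)
              * (2*Real.pi*Complex.I*((P.eval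
                  (((x + ∑ i : Fin d, if ω i = true then h i else 0).val : ℕ) : ℝ) : ℝ) : ℂ)))
              = (2*Real.pi*Complex.I) * ((∑ ω : Fin d → Bool, (-1:ℝ)^(wt ω)
                  * P.eval ((((x.val : ℕ) : ℝ)) + ∑ i : Fin d, if ω i = true then tR i else 0) : ℝ) : ℂ) := by
            rw [Complex.ofReal_sum, Finset.mul_sum]
            apply Finset.sum_congr rfl
            intro ω _
            rw [hval ω]
            push_cast
            ring
          rw [this, hzero]
          norm_num
  · -- some corner out of range
    rw [not_forall] at hall
    obtain ⟨ω₀, hω₀⟩ := hall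
    rw [Finset.prod_eq_zero (Finset.mem_univ ω₀)
        (by rw [if_neg hω₀]; exact conj_iter_zero _),
      Finset.prod_eq_zero (Finset.mem_univ ω₀)
        (by rw [if_neg hω₀]; exact conj_iter_zero _)]

lemma inner_re [Nonempty G] (d : ℕ) (f : G → ℂ) :
    (gowersInner G d fun _ => f).re
      = (((Fintype.card G : ℝ))^(d+1))⁻¹ * (gSum d f).re := by
  rw [gowersInner_eq,
    show ((Fintype.card G : ℂ))^(d+1) = (((Fintype.card G:ℝ)^(d+1) : ℝ) : ℂ) by push_cast; ring,
    ← Complex.ofReal_inv, Complex.re_ofReal_mul]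

lemma conj_iter_ind (m : ℕ) (p : Prop) [Decidable p] :
    (starRingEnd ℂ)^[m] (if p then (1:ℂ) else 0) = if p then 1 else 0 := by
  rw [conj_iter]; split_ifs <;> simp

lemma gSum_ind_re {M N d : ℕ} [NeZero M] :
    (gSum d (fun x : ZMod M => if 1 ≤ x.val ∧ x.val ≤ N then (1:ℂ) else 0)).re
      = ∑ h : Fin d → ZMod M, ∑ x : ZMod M,
          (if (∀ ω ∈ (Finset.univ : Finset (Fin d → Bool)),
              1 ≤ (x + ∑ i : Fin d, if ω i = true then h i else 0).val
                ∧ (x + ∑ i : Fin d, if ω i = true then h i else 0).val ≤ N)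
            then (1:ℝ) else 0) := by
  rw [gSum, Complex.re_sum]
  apply Finset.sum_congr rfl
  intro h _
  rw [gA, Complex.re_sum]
  apply Finset.sum_congr rfl
  intro x _
  have h1 : (∏ ω : Fin d → Bool, (starRingEnd ℂ)^[wt ω]
      ((fun y : ZMod M => if 1 ≤ y.val ∧ y.val ≤ N then (1:ℂ) else 0)
        (x + ∑ i : Fin d, if ω i = true then h i else 0)))
      = ∏ ω : Fin d → Bool,
          (if 1 ≤ (x + ∑ i : Fin d, if ω i = true then h i else 0).val
            ∧ (x + ∑ i : Fin d, if ω i = true then h i else 0).val ≤ N then (1:ℂ) else 0) :=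
    Finset.prod_congr rfl fun ω _ => conj_iter_ind _ _
  rw [h1, Finset.prod_boole, apply_ite Complex.re, Complex.one_re, Complex.zero_re]
  congr 1

lemma ind_norm_bounds {M N d : ℕ} [NeZero M] (hd : 1 ≤ d) (h1M : 1 < M) (h1N : 1 ≤ N) :
    0 < gowersNorm (ZMod M) d (fun x : ZMod M => if 1 ≤ x.val ∧ x.val ≤ N then (1:ℂ) else 0)
    ∧ gowersNorm (ZMod M) d
        (fun x : ZMod M => if 1 ≤ x.val ∧ x.val ≤ N then (1:ℂ) else 0) ≤ 1 := by
  haveI : Fact (1 < M) := ⟨h1M⟩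
  have hM0 : (0:ℝ) < M := by exact_mod_cast Nat.pos_of_ne_zero (NeZero.ne M)
  have hcard : (Fintype.card (ZMod M) : ℝ) = (M : ℝ) := by exact_mod_cast ZMod.card M
  have hre := inner_re (G := ZMod M) d
    (fun x : ZMod M => if 1 ≤ x.val ∧ x.val ≤ N then (1:ℂ) else 0)
  rw [gSum_ind_re, hcard] at hre
  set S : ℝ := ∑ h : Fin d → ZMod M, ∑ x : ZMod M,
      (if (∀ ω ∈ (Finset.univ : Finset (Fin d → Bool)),
          1 ≤ (x + ∑ i : Fin d, if ω i = true then h i else 0).val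
            ∧ (x + ∑ i : Fin d, if ω i = true then h i else 0).val ≤ N)
        then (1:ℝ) else 0) with hS
  have hterm_nonneg : ∀ (h : Fin d → ZMod M) (x : ZMod M),
      (0:ℝ) ≤ (if (∀ ω ∈ (Finset.univ : Finset (Fin d → Bool)),
          1 ≤ (x + ∑ i : Fin d, if ω i = true then h i else 0).val
            ∧ (x + ∑ i : Fin d, if ω i = true then h i else 0).val ≤ N)
        then (1:ℝ) else 0) := by
    intro h x; split_ifs <;> norm_num
  have hterm_le : ∀ (h : Fin d → ZMod M) (x : ZMod M),
      (if (∀ ω ∈ (Finset.univ : Finset (Fin d → Bool)),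
          1 ≤ (x + ∑ i : Fin d, if ω i = true then h i else 0).val
            ∧ (x + ∑ i : Fin d, if ω i = true then h i else 0).val ≤ N)
        then (1:ℝ) else 0) ≤ 1 := by
    intro h x; split_ifs <;> norm_num
  have hS_le : S ≤ (M:ℝ)^(d+1) := by
    rw [hS]
    have step1 : ∀ h : Fin d → ZMod M, (∑ x : ZMod M,
        (if (∀ ω ∈ (Finset.univ : Finset (Fin d → Bool)),
            1 ≤ (x + ∑ i : Fin d, if ω i = true then h i else 0).val
              ∧ (x + ∑ i : Fin d, if ω i = true then h i else 0).val ≤ N)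
          then (1:ℝ) else 0)) ≤ (M:ℝ) := by
      intro h
      calc (∑ x : ZMod M, (if (∀ ω ∈ (Finset.univ : Finset (Fin d → Bool)),
            1 ≤ (x + ∑ i : Fin d, if ω i = true then h i else 0).val
              ∧ (x + ∑ i : Fin d, if ω i = true then h i else 0).val ≤ N)
          then (1:ℝ) else 0))
          ≤ ∑ _x : ZMod M, (1:ℝ) :=
            Finset.sum_le_sum fun x _ => hterm_le h x
        _ = (M:ℝ) := by
            rw [Finset.sum_const, Finset.card_univ, ZMod.card, nsmul_eq_mul, mul_one]
    calc (∑ h : Fin d → ZMod M, ∑ x : ZMod M,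
        (if (∀ ω ∈ (Finset.univ : Finset (Fin d → Bool)),
            1 ≤ (x + ∑ i : Fin d, if ω i = true then h i else 0).val
              ∧ (x + ∑ i : Fin d, if ω i = true then h i else 0).val ≤ N)
          then (1:ℝ) else 0))
        ≤ ∑ _h : Fin d → ZMod M, (M:ℝ) :=
          Finset.sum_le_sum fun h _ => step1 h
      _ = (M:ℝ)^(d+1) := by
          rw [Finset.sum_const, Finset.card_univ, Fintype.card_fun, Fintype.card_fin,
            ZMod.card, nsmul_eq_mul, pow_succ]
          push_cast
          ring
  have hS_ge : (1:ℝ) ≤ S := by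
    rw [hS]
    have inner_ge : (1:ℝ) ≤ ∑ x : ZMod M,
        (if (∀ ω ∈ (Finset.univ : Finset (Fin d → Bool)),
            1 ≤ (x + ∑ i : Fin d, if ω i = true then (0 : Fin d → ZMod M) i else 0).val
              ∧ (x + ∑ i : Fin d, if ω i = true then (0 : Fin d → ZMod M) i else 0).val ≤ N)
          then (1:ℝ) else 0) := by
      have h1 : ((1 : ZMod M) ∈ Finset.univ) := Finset.mem_univ _
      have hle := Finset.single_le_sum (f := fun x : ZMod M =>
        (if (∀ ω ∈ (Finset.univ : Finset (Fin d → Bool)),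
            1 ≤ (x + ∑ i : Fin d, if ω i = true then (0 : Fin d → ZMod M) i else 0).val
              ∧ (x + ∑ i : Fin d, if ω i = true then (0 : Fin d → ZMod M) i else 0).val ≤ N)
          then (1:ℝ) else 0)) (fun x _ => hterm_nonneg 0 x) h1
      have hx1 : (if (∀ ω ∈ (Finset.univ : Finset (Fin d → Bool)),
          1 ≤ ((1 : ZMod M) + ∑ i : Fin d, if ω i = true then (0 : Fin d → ZMod M) i else 0).val
            ∧ ((1 : ZMod M) + ∑ i : Fin d,
                if ω i = true then (0 : Fin d → ZMod M) i else 0).val ≤ N)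
          then (1:ℝ) else 0) = 1 := by
        apply if_pos
        intro ω _
        have hzero : (∑ i : Fin d, if ω i = true then (0 : Fin d → ZMod M) i else 0)
            = (0 : ZMod M) := by simp
        rw [hzero, add_zero, ZMod.val_one]
        exact ⟨le_refl 1, h1N⟩
      exact le_trans (le_of_eq hx1.symm) hle
    refine le_trans inner_ge ?_
    exact Finset.single_le_sum (f := fun h : Fin d → ZMod M => ∑ x : ZMod M,
        (if (∀ ω ∈ (Finset.univ : Finset (Fin d → Bool)),
            1 ≤ (x + ∑ i : Fin d, if ω i = true then h i else 0).val
              ∧ (x + ∑ i : Fin d, if ω i = true then h i else 0).val ≤ N)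
          then (1:ℝ) else 0))
      (fun h _ => Finset.sum_nonneg fun x _ => hterm_nonneg h x) (Finset.mem_univ 0)
  have hS0 : (0:ℝ) ≤ S := le_trans zero_le_one hS_ge
  have hpowpos : (0:ℝ) < (M:ℝ)^(d+1) := by positivity
  constructor
  · rw [gowersNorm]
    apply Real.rpow_pos_of_pos
    rw [hre]
    have hinv : (0:ℝ) < ((M:ℝ)^(d+1))⁻¹ := by positivity
    nlinarith
  · rw [gowersNorm]
    apply Real.rpow_le_one
    · rw [hre]
      exact mul_nonneg (by positivity) hS0
    · rw [hre]
      calc ((M:ℝ)^(d+1))⁻¹ * S ≤ ((M:ℝ)^(d+1))⁻¹ * ((M:ℝ)^(d+1)) :=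
            mul_le_mul_of_nonneg_left hS_le (by positivity)
        _ = 1 := inv_mul_cancel₀ (ne_of_gt hpowpos)
    · positivity

lemma sum_indicator_eq {M N : ℕ} [NeZero M] (hNM : N < M) (g : ℕ → ℂ) :
    ∑ x : ZMod M, (if 1 ≤ x.val ∧ x.val ≤ N then g x.val else 0)
      = ∑ n ∈ Finset.Icc 1 N, g n := by
  rw [← Finset.sum_filter]
  apply Finset.sum_nbij' (i := fun x : ZMod M => x.val) (j := fun n : ℕ => (n : ZMod M))
  · intro a ha
    rw [Finset.mem_filter] at ha
    rw [Finset.mem_Icc]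
    exact ⟨ha.2.1, ha.2.2⟩
  · intro n hn
    rw [Finset.mem_Icc] at hn
    rw [Finset.mem_filter]
    refine ⟨Finset.mem_univ _, ?_⟩
    rw [ZMod.val_cast_of_lt (lt_of_le_of_lt hn.2 hNM)]
    exact hn
  · intro a _
    rw [ZMod.natCast_val, ZMod.cast_id]
  · intro n hn
    rw [Finset.mem_Icc] at hn
    exact ZMod.val_cast_of_lt (lt_of_le_of_lt hn.2 hNM)
  · intro a _
    rfl

lemma key_bound (d N : ℕ) (hd : 1 ≤ d) (hN : 0 < N) (c : ℕ → ℂ) (P : Polynomial ℝ)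
    (hP : P.degree < ((d : ℕ) : WithBot ℕ)) :
    ‖(N : ℂ)⁻¹ * ∑ n ∈ Finset.Icc 1 N,
        c n * Complex.exp (2 * Real.pi * Complex.I * (P.eval (n : ℝ)))‖
      ≤ 2^d * gowersIntervalNorm d N c := by
  haveI : NeZero (2 ^ d * N) := ⟨by positivity⟩
  have h2d : 2 ≤ 2^d := by
    calc (2:ℕ) = 2^1 := (pow_one 2).symm
      _ ≤ 2^d := Nat.pow_le_pow_right (by norm_num) hd
  have h1M : 1 < 2^d * N := by nlinarith
  have hNM : N < 2^d * N := by nlinarith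
  have hMN : 2*N ≤ 2^d * N + 1 := by nlinarith
  set F : ZMod (2^d * N) → ℂ := fun x =>
    if 1 ≤ x.val ∧ x.val ≤ N then
      c x.val * Complex.exp (2 * Real.pi * Complex.I * ((P.eval ((x.val : ℕ) : ℝ) : ℝ) : ℂ))
    else 0 with hF
  set F0 : ZMod (2^d * N) → ℂ := fun x =>
    if 1 ≤ x.val ∧ x.val ≤ N then c x.val else 0 with hF0
  have hsum : ∑ x : ZMod (2^d * N), F x
      = ∑ n ∈ Finset.Icc 1 N,
          c n * Complex.exp (2 * Real.pi * Complex.I * (P.eval (n : ℝ))) := by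
    rw [hF]
    exact sum_indicator_eq hNM
      (fun n => c n * Complex.exp (2 * Real.pi * Complex.I * (P.eval (n : ℝ))))
  have hcard : (Fintype.card (ZMod (2^d * N)) : ℝ) = ((2^d * N : ℕ) : ℝ) := by
    exact_mod_cast ZMod.card _
  -- step: relate the averages
  have havg : ‖(N : ℂ)⁻¹ * ∑ n ∈ Finset.Icc 1 N,
        c n * Complex.exp (2 * Real.pi * Complex.I * (P.eval (n : ℝ)))‖
      = 2^d * ‖((Fintype.card (ZMod (2^d * N)) : ℂ))⁻¹
          * ∑ x : ZMod (2^d * N), F x‖ := by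
    rw [hsum, norm_mul, norm_mul, norm_inv, norm_inv]
    have hc : ‖(Fintype.card (ZMod (2^d * N)) : ℂ)‖ = ((2^d * N : ℕ) : ℝ) := by
      rw [show ((Fintype.card (ZMod (2^d * N)) : ℂ)) = (((Fintype.card (ZMod (2^d*N)) : ℝ)) : ℂ)
          by push_cast; ring]
      rw [Complex.norm_real, Real.norm_of_nonneg (by positivity)]
      rw [hcard]
    have hcN : ‖(N:ℂ)‖ = (N:ℝ) := by
      rw [show ((N : ℂ)) = (((N:ℝ)):ℂ) by push_cast; ring]
      rw [Complex.norm_real, Real.norm_of_nonneg (by positivity)]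
    rw [hc, hcN]
    have hNne : ((N:ℝ)) ≠ 0 := by positivity
    set A := ‖∑ n ∈ Finset.Icc 1 N,
        c n * Complex.exp (2 * Real.pi * Complex.I * (P.eval (n : ℝ)))‖ with hA
    rw [show (((2^d * N : ℕ) : ℝ)) = (2^d : ℝ) * (N:ℝ) by push_cast; ring, mul_inv]
    have h2ne : ((2:ℝ)^d) ≠ 0 := by positivity
    field_simp
  rw [havg]
  -- step: von Neumann
  haveI : Nonempty (ZMod (2^d * N)) := ⟨0⟩
  have hvn := abs_avg_le_gowersNorm (G := ZMod (2^d * N)) F d hd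
  -- step: phase invariance
  have hphase : gowersNorm (ZMod (2^d * N)) d F = gowersNorm (ZMod (2^d * N)) d F0 := by
    rw [gowersNorm, gowersNorm, hF, hF0, inner_phase hMN d c P hP]
  -- step: interval norm
  obtain ⟨hip, hil⟩ := ind_norm_bounds (M := 2^d * N) (N := N) (d := d) hd h1M hN
  have hnorm0 : (0:ℝ) ≤ gowersNorm (ZMod (2^d * N)) d F0 := by
    rw [gowersNorm]
    apply Real.rpow_nonneg
    exact inner_re_nonneg d hd F0
  have hintv : gowersNorm (ZMod (2^d * N)) d F0 ≤ gowersIntervalNorm d N c := by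
    rw [gowersIntervalNorm, dif_pos hN]
    rw [le_div_iff₀ hip]
    calc gowersNorm (ZMod (2^d * N)) d F0
          * gowersNorm (ZMod (2 ^ d * N)) d (fun x => if 1 ≤ x.val ∧ x.val ≤ N then 1 else 0)
        ≤ gowersNorm (ZMod (2^d * N)) d F0 * 1 :=
          mul_le_mul_of_nonneg_left hil hnorm0
      _ = gowersNorm (ZMod (2^d * N)) d F0 := mul_one _
      _ = gowersNorm (ZMod (2 ^ d * N)) d
            (fun x => if 1 ≤ x.val ∧ x.val ≤ N then c x.val else 0) := by rw [hF0]
  calc (2:ℝ)^d * ‖((Fintype.card (ZMod (2^d * N)) : ℂ))⁻¹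
        * ∑ x : ZMod (2^d * N), F x‖
      ≤ 2^d * gowersNorm (ZMod (2^d * N)) d F := by
        apply mul_le_mul_of_nonneg_left hvn (by positivity)
    _ = 2^d * gowersNorm (ZMod (2^d * N)) d F0 := by rw [hphase]
    _ ≤ 2^d * gowersIntervalNorm d N c := by
        apply mul_le_mul_of_nonneg_left hintv (by positivity)

end OscAux

/-- A bounded sequence whose Gowers `U^{k+1}[N]` norms tend to `0` is oscillating of order `k`:
for every real polynomial `P` of degree at most `k`,
`(1/N) ∑_{n=1}^N c n e^{2πi P(n)} → 0`. -/
theorem oscillating_of_small_gowers_norm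
    (k : ℕ) (hk : 1 ≤ k) (c : ℕ → ℂ) (B : ℝ) (hB : ∀ n, ‖c n‖ ≤ B)
    (hgowers : Tendsto (fun N : ℕ => gowersIntervalNorm (k + 1) N c) atTop (nhds 0)) :
    ∀ P : Polynomial ℝ, P.natDegree ≤ k →
      Tendsto (fun N : ℕ => (N : ℂ)⁻¹ *
          ∑ n ∈ Finset.Icc 1 N, c n * Complex.exp (2 * Real.pi * Complex.I * (P.eval (n : ℝ))))
        atTop (nhds 0) := by
  intro P hPdeg
  have hdeg : P.degree < (((k+1 : ℕ) : ℕ) : WithBot ℕ) := by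
    apply lt_of_le_of_lt (Polynomial.degree_le_natDegree)
    exact_mod_cast Nat.lt_succ_of_le hPdeg
  apply squeeze_zero_norm' (a := fun N : ℕ => 2^(k+1) * gowersIntervalNorm (k+1) N c)
  · filter_upwards [Filter.eventually_ge_atTop 1] with N hN1
    have := OscAux.key_bound (k+1) N (by omega) hN1 c P hdeg
    simpa using this
  · have := hgowers.const_mul ((2:ℝ)^(k+1))
    simpa using this
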